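/- Let E be an exact category with enough projectives and P a projective cover of E. If P has pseudo simple products, then for all objects I, A of E the inverse image functor along the product projection, (−) × A : Sub(I) → Sub(I × A) (pullback of subobjects along the projection I × A → I), has a right adjoint. -/

import Mathlib

open CategoryTheory Limits

namespace ExComp

universe v u

variable {E : Type u} [Category.{v} E]

/-- A regular epimorphism, as a property of a morphism. -/
def RegEpi {A B : E} (f : A ⟶ B) : Prop := Nonempty (RegularEpi f)

/-- An object is (regular) projective if its covariant hom functor sends regular
epimorphisms to surjections. -/
def RegProjective (X : E) : Prop :=
  ∀ ⦃A B : E⦄ (e : A ⟶ B), RegEpi e → ∀ f : X ⟶ B, ∃ g : X ⟶ A, g ≫ e = f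

/-- `E` has enough projectives: every object admits a regular epimorphism from a
projective object. -/
def EnoughRegProjectives (E : Type u) [Category.{v} E] : Prop :=
  ∀ A : E, ∃ (X : E) (p : X ⟶ A), RegProjective X ∧ RegEpi p

/-- An internal equivalence relation: a jointly monic, reflexive, symmetric and
transitive pair of parallel arrows. -/
structure IsEquivRelPair {R X : E} (r₁ r₂ : R ⟶ X) : Prop where
  jointlyMono : ∀ ⦃T : E⦄ (h k : T ⟶ R), h ≫ r₁ = k ≫ r₁ → h ≫ r₂ = k ≫ r₂ → h = k
  refl : ∃ d : X ⟶ R, d ≫ r₁ = 𝟙 X ∧ d ≫ r₂ = 𝟙 X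
  symm : ∃ s : R ⟶ R, s ≫ r₁ = r₂ ∧ s ≫ r₂ = r₁
  trans : ∀ ⦃T : E⦄ (p q : T ⟶ R), p ≫ r₂ = q ≫ r₁ →
    ∃ t : T ⟶ R, t ≫ r₁ = p ≫ r₁ ∧ t ≫ r₂ = q ≫ r₂

/-- An exact category: a finitely complete category where every morphism factors as a
regular epi followed by a mono, regular epis are stable under pullback, and every
internal equivalence relation is effective (it is the kernel pair of the coequaliser
it admits). -/
structure IsExact (E : Type u) [Category.{v} E] [HasFiniteLimits E] : Prop where
  factor : ∀ ⦃A B : E⦄ (f : A ⟶ B), ∃ (I : E) (e : A ⟶ I) (m : I ⟶ B),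
    RegEpi e ∧ Mono m ∧ e ≫ m = f
  stable : ∀ ⦃A B C : E⦄ (f : A ⟶ B) (g : C ⟶ B), RegEpi f → RegEpi (pullback.snd f g)
  effective : ∀ ⦃R X : E⦄ (r₁ r₂ : R ⟶ X), IsEquivRelPair r₁ r₂ →
    ∃ (Q : E) (q : X ⟶ Q) (w : r₁ ≫ q = r₂ ≫ q),
      Nonempty (IsColimit (Cofork.ofπ q w)) ∧ IsPullback r₁ r₂ q q

/-- A projective cover of `E`: a (full sub)collection of objects, each projective,
such that every object of `E` admits a regular epimorphism from one of them. -/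
def IsProjectiveCover (P : Set E) : Prop :=
  (∀ X ∈ P, RegProjective X) ∧ ∀ A : E, ∃ X ∈ P, ∃ p : X ⟶ A, RegEpi p

section FinLim
variable [HasFiniteLimits E]

/-- `X` is internally projective: every arrow `T ⨯ X ⟶ B` lifts along a regular epi
`A ↠ B` after passing to a regular epi `U ↠ T`. -/
def InternallyProjective (X : E) : Prop :=
  ∀ ⦃T A B : E⦄ (e : A ⟶ B), RegEpi e → ∀ f : T ⨯ X ⟶ B,
    ∃ (U : E) (u : U ⟶ T) (g : U ⨯ X ⟶ A), RegEpi u ∧ g ≫ e = prod.map u (𝟙 X) ≫ f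

/-- Cartesian closure, as a property: for every object `X` the functor `(−) ⨯ X` has a
right adjoint. -/
def CartesianClosedP (E : Type u) [Category.{v} E] [HasFiniteLimits E] : Prop :=
  ∀ X : E, (prod.functor.flip.obj X).IsLeftAdjoint

/-- Local cartesian closure, as a property: every slice is cartesian closed. -/
def LocallyCartesianClosedP (E : Type u) [Category.{v} E] [HasFiniteLimits E] : Prop :=
  ∀ (I : E) (F : Over I), ((prod.functor (C := Over I)).flip.obj F).IsLeftAdjoint

end FinLim

/-! ## Weak products and weak simple products -/

/-- A weak product in `P` of `X` and `Y`: a span through which every span in `P`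
factors (not necessarily uniquely). -/
structure IsWeakProduct (P : Set E) {X Y V : E} (p : V ⟶ X) (q : V ⟶ Y) : Prop where
  mem : V ∈ P
  lift : ∀ ⦃V' : E⦄, V' ∈ P → ∀ (p' : V' ⟶ X) (q' : V' ⟶ Y),
    ∃ h : V' ⟶ V, h ≫ p = p' ∧ h ≫ q = q'

/-- An arrow out of a weak product is determined by projections if it coequalises
every pair of arrows (from an object of `P`) coequalised by both projections. -/
def DeterminedByProjections (P : Set E) {V X Y Z : E} (p : V ⟶ X) (q : V ⟶ Y)
    (f : V ⟶ Z) : Prop :=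
  ∀ ⦃V' : E⦄, V' ∈ P → ∀ (h k : V' ⟶ V), h ≫ p = k ≫ p → h ≫ q = k ≫ q → h ≫ f = k ≫ f

/-- A candidate diagram for a weak simple product of a span `J ←f Y →g X`. -/
structure WSPCone (P : Set E) {J Y X : E} (f : Y ⟶ J) (g : Y ⟶ X)
    (W V : E) (w : W ⟶ J) (p : V ⟶ W) (q : V ⟶ X) (e : V ⟶ Y) : Prop where
  memW : W ∈ P
  wp : IsWeakProduct P p q
  det : DeterminedByProjections P p q e
  comm₁ : p ≫ w = e ≫ f
  comm₂ : q = e ≫ g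

/-- A weak simple product: a weakly terminal candidate diagram. -/
structure IsWeakSimpleProduct (P : Set E) {J Y X : E} (f : Y ⟶ J) (g : Y ⟶ X)
    (W V : E) (w : W ⟶ J) (p : V ⟶ W) (q : V ⟶ X) (e : V ⟶ Y) : Prop where
  cone : WSPCone P f g W V w p q e
  lift : ∀ ⦃W' V' : E⦄ (w' : W' ⟶ J) (p' : V' ⟶ W') (q' : V' ⟶ X) (e' : V' ⟶ Y),
    WSPCone P f g W' V' w' p' q' e' →
    ∃ (α : W' ⟶ W) (β : V' ⟶ V),
      α ≫ w = w' ∧ β ≫ p = p' ≫ α ∧ β ≫ q = q' ∧ β ≫ e = e'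

/-- `P` has weak simple products. -/
def HasWeakSimpleProducts (P : Set E) : Prop :=
  ∀ ⦃J Y X : E⦄, J ∈ P → Y ∈ P → X ∈ P → ∀ (f : Y ⟶ J) (g : Y ⟶ X),
    ∃ (W V : E) (w : W ⟶ J) (p : V ⟶ W) (q : V ⟶ X) (e : V ⟶ Y),
      IsWeakSimpleProduct P f g W V w p q e

/-! ## Pseudo simple products -/

/-- A candidate diagram for a pseudo simple product (no determinacy requirement). -/
structure PSPCone (P : Set E) {J Y X : E} (f : Y ⟶ J) (g : Y ⟶ X)
    (W V : E) (w : W ⟶ J) (p : V ⟶ W) (q : V ⟶ X) (e : V ⟶ Y) : Prop where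
  memW : W ∈ P
  wp : IsWeakProduct P p q
  comm₁ : p ≫ w = e ≫ f
  comm₂ : q = e ≫ g

/-- A pseudo simple product: a weakly terminal candidate diagram. -/
structure IsPseudoSimpleProduct (P : Set E) {J Y X : E} (f : Y ⟶ J) (g : Y ⟶ X)
    (W V : E) (w : W ⟶ J) (p : V ⟶ W) (q : V ⟶ X) (e : V ⟶ Y) : Prop where
  cone : PSPCone P f g W V w p q e
  lift : ∀ ⦃W' V' : E⦄ (w' : W' ⟶ J) (p' : V' ⟶ W') (q' : V' ⟶ X) (e' : V' ⟶ Y),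
    PSPCone P f g W' V' w' p' q' e' →
    ∃ (α : W' ⟶ W) (β : V' ⟶ V),
      α ≫ w = w' ∧ β ≫ p = p' ≫ α ∧ β ≫ q = q' ∧ β ≫ e = e'

/-- `P` has pseudo simple products. -/
def HasPseudoSimpleProducts (P : Set E) : Prop :=
  ∀ ⦃J Y X : E⦄, J ∈ P → Y ∈ P → X ∈ P → ∀ (f : Y ⟶ J) (g : Y ⟶ X),
    ∃ (W V : E) (w : W ⟶ J) (p : V ⟶ W) (q : V ⟶ X) (e : V ⟶ Y),
      IsPseudoSimpleProduct P f g W V w p q e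

/-! ## Weak exponentials -/

/-- A candidate diagram for a weak exponential of `X` and `Y`. -/
structure WExpCone (P : Set E) {X Y : E} (W V : E) (p : V ⟶ W) (q : V ⟶ X)
    (e : V ⟶ Y) : Prop where
  memW : W ∈ P
  wp : IsWeakProduct P p q
  det : DeterminedByProjections P p q e

/-- A weak exponential of `X` and `Y` in `P`. -/
structure IsWeakExponential (P : Set E) {X Y : E} (W V : E) (p : V ⟶ W) (q : V ⟶ X)
    (e : V ⟶ Y) : Prop where
  cone : WExpCone P W V p q e
  lift : ∀ ⦃W' V' : E⦄ (p' : V' ⟶ W') (q' : V' ⟶ X) (e' : V' ⟶ Y),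
    WExpCone P W' V' p' q' e' →
    ∃ (α : W' ⟶ W) (β : V' ⟶ V), β ≫ p = p' ≫ α ∧ β ≫ q = q' ∧ β ≫ e = e'

/-- `P` has weak exponentials. -/
def HasWeakExponentials (P : Set E) : Prop :=
  ∀ ⦃X Y : E⦄, X ∈ P → Y ∈ P →
    ∃ (W V : E) (p : V ⟶ W) (q : V ⟶ X) (e : V ⟶ Y), IsWeakExponential P W V p q e

/-- A quasi exponential of `X` and `B`: the weak universal property of an exponential
restricted to projective sources. -/
def IsQuasiExponential [HasFiniteLimits E] (P : Set E) (X : E) {B : E} (W : E)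
    (e : W ⨯ X ⟶ B) : Prop :=
  ∀ ⦃Z : E⦄, Z ∈ P → ∀ f : Z ⨯ X ⟶ B, ∃ g : Z ⟶ W, prod.map g (𝟙 X) ≫ e = f

section FinLim2
variable [HasFiniteLimits E]

/-! ## Pseudo equivalence relations, equalities and generalised weak (simple) products -/

/-- A pseudo equivalence relation: a pair of parallel arrows whose image in `E` is an
equivalence relation. -/
def IsPseudoEquivRel {Y1 Y0 : E} (y₁ y₂ : Y1 ⟶ Y0) : Prop :=
  ∃ (R : E) (e : Y1 ⟶ R) (m : R ⟶ Y0 ⨯ Y0), RegEpi e ∧ Mono m ∧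
    e ≫ m = prod.lift y₁ y₂ ∧ IsEquivRelPair (m ≫ prod.fst) (m ≫ prod.snd)

/-- An equality for a weak limit, relative to the comparison arrow `c : V0 ⟶ L` into
the actual limit: a pseudo equivalence relation `v₁, v₂ : V1 ⇉ V0` in `P` such that
`c` is a coequaliser of `v₁, v₂` and `V1` regularly covers the kernel pair of `c`. -/
structure IsEqualityFor (P : Set E) {V1 V0 L : E} (c : V0 ⟶ L) (v₁ v₂ : V1 ⟶ V0) :
    Prop where
  mem : V1 ∈ P
  per : IsPseudoEquivRel v₁ v₂
  w : v₁ ≫ c = v₂ ≫ c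
  coeq : Nonempty (IsColimit (Cofork.ofπ c w))
  cover : RegEpi (pullback.lift v₁ v₂ w)

/-- An arrow `e : V ⟶ Z0` out of a weak product with projections `p, q` preserves
projections with respect to a pseudo equivalence relation `z₁, z₂ : Z1 ⇉ Z0` if for
any equality `v₁, v₂ : V1 ⇉ V` for the weak product there is `t : V1 ⟶ Z1` with
`t ≫ zᵢ = vᵢ ≫ e`. -/
def PreservesProjWP (P : Set E) {V X Y Z1 Z0 : E} (p : V ⟶ X) (q : V ⟶ Y)
    (z₁ z₂ : Z1 ⟶ Z0) (e : V ⟶ Z0) : Prop :=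
  ∀ ⦃V1 : E⦄ (v₁ v₂ : V1 ⟶ V), IsEqualityFor P (prod.lift p q) v₁ v₂ →
    ∃ t : V1 ⟶ Z1, t ≫ z₁ = v₁ ≫ e ∧ t ≫ z₂ = v₂ ≫ e

/-- A candidate diagram for a generalised weak simple product of `f` and `g` with
respect to the pseudo equivalence relation `y₁, y₂`. -/
structure GWSPCone (P : Set E) {Y1 Y0 J X : E} (y₁ y₂ : Y1 ⟶ Y0) (f : Y0 ⟶ J)
    (g : Y0 ⟶ X) (W V : E) (w : W ⟶ J) (p : V ⟶ W) (q : V ⟶ X) (e : V ⟶ Y0) :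
    Prop where
  memW : W ∈ P
  wp : IsWeakProduct P p q
  pres : PreservesProjWP P p q y₁ y₂ e
  comm₁ : p ≫ w = e ≫ f
  comm₂ : q = e ≫ g

/-- A generalised weak simple product: a weakly terminal candidate diagram. -/
structure IsGWSP (P : Set E) {Y1 Y0 J X : E} (y₁ y₂ : Y1 ⟶ Y0) (f : Y0 ⟶ J)
    (g : Y0 ⟶ X) (W V : E) (w : W ⟶ J) (p : V ⟶ W) (q : V ⟶ X) (e : V ⟶ Y0) :
    Prop where
  cone : GWSPCone P y₁ y₂ f g W V w p q e
  lift : ∀ ⦃W' V' : E⦄ (w' : W' ⟶ J) (p' : V' ⟶ W') (q' : V' ⟶ X) (e' : V' ⟶ Y0),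
    GWSPCone P y₁ y₂ f g W' V' w' p' q' e' →
    ∃ (α : W' ⟶ W) (β : V' ⟶ V),
      α ≫ w = w' ∧ β ≫ p = p' ≫ α ∧ β ≫ q = q' ∧ β ≫ e = e'

/-- `P` has generalised weak simple products. -/
def HasGWSP (P : Set E) : Prop :=
  ∀ ⦃Y1 Y0 J X : E⦄, Y1 ∈ P → Y0 ∈ P → J ∈ P → X ∈ P →
    ∀ (y₁ y₂ : Y1 ⟶ Y0), IsPseudoEquivRel y₁ y₂ →
    ∀ (f : Y0 ⟶ J) (g : Y0 ⟶ X), y₁ ≫ f = y₂ ≫ f → y₁ ≫ g = y₂ ≫ g →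
    ∃ (W V : E) (w : W ⟶ J) (p : V ⟶ W) (q : V ⟶ X) (e : V ⟶ Y0),
      IsGWSP P y₁ y₂ f g W V w p q e

/-- A candidate diagram for a generalised weak exponential of `X` and `y₁, y₂`. -/
structure GWExpCone (P : Set E) {X Y1 Y0 : E} (y₁ y₂ : Y1 ⟶ Y0)
    (W V : E) (p : V ⟶ W) (q : V ⟶ X) (e : V ⟶ Y0) : Prop where
  memW : W ∈ P
  wp : IsWeakProduct P p q
  pres : PreservesProjWP P p q y₁ y₂ e

/-- A generalised weak exponential of `X` and a pseudo equivalence relation. -/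
structure IsGWExp (P : Set E) {X Y1 Y0 : E} (y₁ y₂ : Y1 ⟶ Y0)
    (W V : E) (p : V ⟶ W) (q : V ⟶ X) (e : V ⟶ Y0) : Prop where
  cone : GWExpCone P y₁ y₂ W V p q e
  lift : ∀ ⦃W' V' : E⦄ (p' : V' ⟶ W') (q' : V' ⟶ X) (e' : V' ⟶ Y0),
    GWExpCone P y₁ y₂ W' V' p' q' e' →
    ∃ (α : W' ⟶ W) (β : V' ⟶ V), β ≫ p = p' ≫ α ∧ β ≫ q = q' ∧ β ≫ e = e'

/-! ## Weak pullbacks and generalised weak dependent products -/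

/-- A weak pullback in `P` of the cospan `X →f J ←w W`. -/
structure IsWeakPullback (P : Set E) {X J W V : E} (f : X ⟶ J) (w : W ⟶ J)
    (a : V ⟶ X) (b : V ⟶ W) : Prop where
  mem : V ∈ P
  comm : a ≫ f = b ≫ w
  lift : ∀ ⦃V' : E⦄, V' ∈ P → ∀ (a' : V' ⟶ X) (b' : V' ⟶ W), a' ≫ f = b' ≫ w →
    ∃ h : V' ⟶ V, h ≫ a = a' ∧ h ≫ b = b'

/-- Preservation of projections for an arrow out of a weak pullback. -/
def PreservesProjWPB (P : Set E) {V X J W Z1 Z0 : E} (f : X ⟶ J) (w : W ⟶ J)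
    (a : V ⟶ X) (b : V ⟶ W) (h : a ≫ f = b ≫ w) (z₁ z₂ : Z1 ⟶ Z0) (e : V ⟶ Z0) :
    Prop :=
  ∀ ⦃V1 : E⦄ (v₁ v₂ : V1 ⟶ V), IsEqualityFor P (pullback.lift a b h) v₁ v₂ →
    ∃ t : V1 ⟶ Z1, t ≫ z₁ = v₁ ≫ e ∧ t ≫ z₂ = v₂ ≫ e

/-- A candidate diagram for a generalised weak dependent product of `g : Y0 ⟶ X`
along `f : X ⟶ J` with respect to `y₁, y₂`. -/
structure GWDPCone (P : Set E) {Y1 Y0 X J : E} (y₁ y₂ : Y1 ⟶ Y0) (g : Y0 ⟶ X)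
    (f : X ⟶ J) (W V : E) (w : W ⟶ J) (a : V ⟶ X) (b : V ⟶ W) (e : V ⟶ Y0) :
    Prop where
  memW : W ∈ P
  comm : a ≫ f = b ≫ w
  wpb : IsWeakPullback P f w a b
  overX : e ≫ g = a
  pres : PreservesProjWPB P f w a b comm y₁ y₂ e

/-- A generalised weak dependent product: a weakly terminal candidate diagram. -/
structure IsGWDP (P : Set E) {Y1 Y0 X J : E} (y₁ y₂ : Y1 ⟶ Y0) (g : Y0 ⟶ X)
    (f : X ⟶ J) (W V : E) (w : W ⟶ J) (a : V ⟶ X) (b : V ⟶ W) (e : V ⟶ Y0) :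
    Prop where
  cone : GWDPCone P y₁ y₂ g f W V w a b e
  lift : ∀ ⦃W' V' : E⦄ (w' : W' ⟶ J) (a' : V' ⟶ X) (b' : V' ⟶ W') (e' : V' ⟶ Y0),
    GWDPCone P y₁ y₂ g f W' V' w' a' b' e' →
    ∃ (α : W' ⟶ W) (β : V' ⟶ V),
      α ≫ w = w' ∧ β ≫ a = a' ∧ β ≫ b = b' ≫ α ∧ β ≫ e = e'

/-- `P` has generalised weak dependent products (i.e. `P` is weakly locally cartesian
closed). -/
def HasGWDP (P : Set E) : Prop :=
  ∀ ⦃Y1 Y0 X J : E⦄, Y1 ∈ P → Y0 ∈ P → X ∈ P → J ∈ P →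
    ∀ (y₁ y₂ : Y1 ⟶ Y0), IsPseudoEquivRel y₁ y₂ →
    ∀ (g : Y0 ⟶ X) (f : X ⟶ J), y₁ ≫ g = y₂ ≫ g →
    ∃ (W V : E) (w : W ⟶ J) (a : V ⟶ X) (b : V ⟶ W) (e : V ⟶ Y0),
      IsGWDP P y₁ y₂ g f W V w a b e

/-! ## The functor `w_X` on subobjects induced by weak simple products -/

/-- The adjunction property of the weak-simple-product operation `w_X` on subobjects:
for every subobject `a : A ↪ J ⨯ X`, every `P`-cover `Y ↠ A`, every weak simple
product `W → J` of the induced span and every image factorisation `W ↠ I ↪ J` of it,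
the subobject `I ↪ J` is a value at `a` of a right adjoint to
`(−) ⨯ X : Sub(J) → Sub(J ⨯ X)`. -/
def WAdj (P : Set E) (J X : E) : Prop :=
  ∀ ⦃A : E⦄ (a : A ⟶ J ⨯ X), Mono a →
  ∀ ⦃Y : E⦄, Y ∈ P → ∀ (c : Y ⟶ A), RegEpi c →
  ∀ ⦃W V : E⦄ (w : W ⟶ J) (p : V ⟶ W) (q : V ⟶ X) (e : V ⟶ Y),
    IsWeakSimpleProduct P (c ≫ a ≫ prod.fst) (c ≫ a ≫ prod.snd) W V w p q e →
  ∀ ⦃I : E⦄ (ew : W ⟶ I) (m : I ⟶ J), RegEpi ew → Mono m → ew ≫ m = w →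
  ∀ ⦃B : E⦄ (b : B ⟶ J), Mono b →
    ((∃ t : B ⨯ X ⟶ A, t ≫ a = prod.map b (𝟙 X)) ↔ ∃ s : B ⟶ I, s ≫ m = b)

/-! ## Weak dependent products (à la Carboni–Rosolini) -/

/-- `P` has weak dependent products: for `f : X ⟶ J` and `g : Y ⟶ X` in `P` there are
`w : W ⟶ J` in `P` and a surjection `Hom_{P/J}(h, w) → Hom_{P/X}(f*(h), g)` natural
in `h ∈ P/J`. -/
def HasWeakDependentProducts (P : Set E) : Prop :=
  ∀ ⦃X J Y : E⦄, X ∈ P → J ∈ P → Y ∈ P → ∀ (f : X ⟶ J) (g : Y ⟶ X),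
    ∃ (W : E) (_ : W ∈ P) (w : W ⟶ J)
      (ε : ∀ ⦃T : E⦄, T ∈ P → ∀ (h : T ⟶ J) (k : T ⟶ W), k ≫ w = h →
        (pullback h f ⟶ Y)),
      (∀ ⦃T : E⦄ (hT : T ∈ P) (h : T ⟶ J) (k : T ⟶ W) (hk : k ≫ w = h),
         ε hT h k hk ≫ g = pullback.snd h f) ∧
      (∀ ⦃T : E⦄ (hT : T ∈ P) (h : T ⟶ J) (d : pullback h f ⟶ Y),
         d ≫ g = pullback.snd h f → ∃ (k : T ⟶ W) (hk : k ≫ w = h), ε hT h k hk = d) ∧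
      (∀ ⦃T' T : E⦄ (hT' : T' ∈ P) (hT : T ∈ P) (u : T' ⟶ T) (h : T ⟶ J) (k : T ⟶ W)
         (hk : k ≫ w = h),
         ε hT' (u ≫ h) (u ≫ k) (by rw [Category.assoc, hk]) =
           pullback.map (u ≫ h) f h f u (𝟙 X) (𝟙 J) (by simp) (by simp) ≫ ε hT h k hk)

end FinLim2


section Helpers
variable {E : Type u} [Category.{v} E]


lemma RegEpi.epi {A B : E} {f : A ⟶ B} (h : RegEpi f) : Epi f := by
  obtain ⟨h⟩ := h; exact RegularEpi.epi f h

lemma regularEpi_fac {A B M : E} {f : A ⟶ B} (r : RegularEpi f) {k : A ⟶ M}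
    (h : r.left ≫ k = r.right ≫ k) :
    f ≫ Cofork.IsColimit.desc r.isColimit k h = k := by
  have := Cofork.IsColimit.π_desc' r.isColimit k h
  simpa using this

lemma regEpi_comp_isIso {A B C : E} {f : A ⟶ B} (hf : RegEpi f) (g : B ⟶ C) [IsIso g] :
    RegEpi (f ≫ g) := by
  obtain ⟨r⟩ := hf
  haveI : Epi f := RegularEpi.epi f r
  refine ⟨⟨r.W, r.left, r.right, by rw [← Category.assoc, r.w, Category.assoc], ?_⟩⟩
  refine Cofork.IsColimit.mk' _ fun s =>
    ⟨inv g ≫ Cofork.IsColimit.desc r.isColimit s.π s.condition, ?_, ?_⟩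
  · have := regularEpi_fac r s.condition
    simp only [Cofork.π_ofπ, Category.assoc]
    rw [IsIso.hom_inv_id_assoc, this]
  · intro mm hmm
    simp only [Cofork.π_ofπ] at hmm
    have h1 : f ≫ g ≫ mm = s.π := by simpa using hmm
    have h2 : g ≫ mm = Cofork.IsColimit.desc r.isColimit s.π s.condition := by
      apply (cancel_epi f).mp
      rw [h1, regularEpi_fac r s.condition]
    rw [← h2]; simp

lemma regEpi_isIso_comp {A B C : E} (g : A ⟶ B) [IsIso g] {f : B ⟶ C} (hf : RegEpi f) :
    RegEpi (g ≫ f) := by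
  obtain ⟨r⟩ := hf
  haveI : Epi f := RegularEpi.epi f r
  refine ⟨⟨r.W, r.left ≫ inv g, r.right ≫ inv g, by simp [r.w], ?_⟩⟩
  refine Cofork.IsColimit.mk' _ fun s => ?_
  have cond : r.left ≫ (inv g ≫ s.π) = r.right ≫ (inv g ≫ s.π) := by
    have := s.condition; simp only [Category.assoc] at this ⊢; exact this
  refine ⟨Cofork.IsColimit.desc r.isColimit (inv g ≫ s.π) cond, ?_, ?_⟩
  · have := regularEpi_fac r cond
    simp only [Cofork.π_ofπ, Category.assoc]
    rw [this, IsIso.hom_inv_id_assoc]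
  · intro mm hmm
    simp only [Cofork.π_ofπ] at hmm
    apply Cofork.IsColimit.hom_ext r.isColimit
    simp only [Cofork.π_ofπ]
    rw [regularEpi_fac r cond, ← hmm]
    simp

lemma regEpi_desc [HasPullbacks E] {A B M : E} {f : A ⟶ B} (h : RegEpi f)
    (g : A ⟶ M) (hg : pullback.fst f f ≫ g = pullback.snd f f ≫ g) :
    ∃ t : B ⟶ M, f ≫ t = g := by
  obtain ⟨r⟩ := h
  have cond : r.left ≫ g = r.right ≫ g := by
    have h1 : pullback.lift r.left r.right r.w ≫ pullback.fst f f = r.left := pullback.lift_fst _ _ _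
    have h2 : pullback.lift r.left r.right r.w ≫ pullback.snd f f = r.right := pullback.lift_snd _ _ _
    calc r.left ≫ g = pullback.lift r.left r.right r.w ≫ pullback.fst f f ≫ g := by
            rw [← Category.assoc, h1]
      _ = pullback.lift r.left r.right r.w ≫ pullback.snd f f ≫ g := by rw [hg]
      _ = r.right ≫ g := by rw [← Category.assoc, h2]
  exact ⟨Cofork.IsColimit.desc r.isColimit g cond, regularEpi_fac r cond⟩

lemma descend_mono [HasPullbacks E] {A B M N : E} {e : A ⟶ B} (he : RegEpi e) {m : M ⟶ N}
    (hm : Mono m) (u : A ⟶ M) (v : B ⟶ N) (huv : u ≫ m = e ≫ v) :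
    ∃ t : B ⟶ M, e ≫ t = u ∧ t ≫ m = v := by
  haveI := hm
  haveI := he.epi
  have hker : pullback.fst e e ≫ u = pullback.snd e e ≫ u := by
    apply (cancel_mono m).mp
    rw [Category.assoc, Category.assoc, huv, ← Category.assoc, ← Category.assoc,
      pullback.condition]
  obtain ⟨t, ht⟩ := regEpi_desc he u hker
  refine ⟨t, ht, ?_⟩
  apply (cancel_epi e).mp
  rw [← Category.assoc, ht, huv]

lemma isIso_of_regEpi_factor {A B M : E} {f : A ⟶ B} (hf : RegEpi f) {h : A ⟶ M} {m : M ⟶ B}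
    (hm : Mono m) (hfac : h ≫ m = f) : IsIso m := by
  obtain ⟨r⟩ := hf
  haveI : Epi f := RegularEpi.epi f r
  haveI := hm
  have cond : r.left ≫ h = r.right ≫ h := by
    apply (cancel_mono m).mp
    rw [Category.assoc, Category.assoc, hfac, r.w]
  let k : B ⟶ M := Cofork.IsColimit.desc r.isColimit h cond
  have hk : f ≫ k = h := regularEpi_fac r cond
  have hkm : k ≫ m = 𝟙 B := by
    apply (cancel_epi f).mp
    rw [← Category.assoc, hk, hfac, Category.comp_id]
  have hmk : m ≫ k = 𝟙 M := by
    apply (cancel_mono m).mp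
    rw [Category.assoc, hkm, Category.comp_id, Category.id_comp]
  exact ⟨k, hmk, hkm⟩


lemma mk_le_iff {X A : E} (n : A ⟶ X) [Mono n] (S : Subobject X) :
    Subobject.mk n ≤ S ↔ ∃ t : A ⟶ (S : E), t ≫ S.arrow = n :=
  ⟨fun h => ⟨Subobject.ofMkLE n S h, Subobject.ofMkLE_arrow h⟩,
   fun ⟨t, ht⟩ => Subobject.mk_le_of_comm t ht⟩

lemma mk_le_mk_iff {X A B : E} (f : A ⟶ X) (g : B ⟶ X) [Mono f] [Mono g] :
    Subobject.mk f ≤ Subobject.mk g ↔ ∃ t : A ⟶ B, t ≫ g = f :=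
  ⟨fun h => ⟨Subobject.ofMkLEMk f g h, Subobject.ofMkLEMk_comp h⟩,
   fun ⟨t, ht⟩ => Subobject.mk_le_mk_of_comm t ht⟩

lemma pullback_obj_mk [HasPullbacks E] {X Y Z : E} (f : X ⟶ Y) (g : Z ⟶ Y) [Mono g] :
    (Subobject.pullback f).obj (Subobject.mk g) = Subobject.mk (pullback.snd g f) := by
  apply Quotient.sound
  exact ⟨MonoOver.isoMk (Iso.refl _) (by simp)⟩

section Exactness
variable [HasFiniteLimits E]

lemma regEpi_comp (hE : IsExact E) {A B C : E} {f : A ⟶ B} {g : B ⟶ C}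
    (hf : RegEpi f) (hg : RegEpi g) : RegEpi (f ≫ g) := by
  obtain ⟨M, e, m, he, hm, hfac⟩ := hE.factor (f ≫ g)
  haveI := hm
  have hl : pullback.lift e f hfac ≫ pullback.snd m g = f := pullback.lift_snd _ _ _
  haveI : IsIso (pullback.snd m g) :=
    isIso_of_regEpi_factor hf (inferInstance : Mono (pullback.snd m g)) hl
  have hg2 : (inv (pullback.snd m g) ≫ pullback.fst m g) ≫ m = g := by
    rw [Category.assoc, pullback.condition, IsIso.inv_hom_id_assoc]
  haveI : IsIso m := isIso_of_regEpi_factor hg hm hg2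
  rw [← hfac]
  exact regEpi_comp_isIso he m

lemma regEpi_pullback_fst (hE : IsExact E) {A B C : E} (f : A ⟶ B) (g : C ⟶ B)
    (hg : RegEpi g) : RegEpi (pullback.fst f g) := by
  have h := regEpi_isIso_comp (pullbackSymmetry f g).hom (hE.stable g f hg)
  rwa [pullbackSymmetry_hom_comp_snd] at h

set_option maxHeartbeats 1600000 in
lemma key_exists (hE : IsExact E) {P : Set E} (hP : IsProjectiveCover P)
    (hpsp : HasPseudoSimpleProducts P) (I A : E) (S : Subobject (I ⨯ A)) :
    ∃ R : Subobject I, ∀ T : Subobject I,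
      ((Subobject.pullback (prod.fst : I ⨯ A ⟶ I)).obj T ≤ S ↔ T ≤ R) := by
  obtain ⟨hproj, hcover⟩ := hP
  obtain ⟨J₀, hJ₀, pI, hpI⟩ := hcover I
  obtain ⟨X₀, hX₀, pA, hpA⟩ := hcover A
  -- Build a projective cover `Y` of `S` together with exact lifts to `J₀` and `X₀`.
  set tB := pullback.fst (S.arrow ≫ (prod.fst : I ⨯ A ⟶ I)) pI with htB
  set tJ := pullback.snd (S.arrow ≫ (prod.fst : I ⨯ A ⟶ I)) pI with htJ
  set tb2 := pullback.fst (tB ≫ S.arrow ≫ (prod.snd : I ⨯ A ⟶ A)) pA with htb2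
  set tX := pullback.snd (tB ≫ S.arrow ≫ (prod.snd : I ⨯ A ⟶ A)) pA with htX
  obtain ⟨Y, hY, cY, hcY⟩ := hcover (pullback (tB ≫ S.arrow ≫ (prod.snd : I ⨯ A ⟶ A)) pA)
  set cB : Y ⟶ (S : E) := cY ≫ tb2 ≫ tB with hcBdef
  set f₀ : Y ⟶ J₀ := cY ≫ tb2 ≫ tJ with hf₀def
  set g₀ : Y ⟶ X₀ := cY ≫ tX with hg₀def
  have hcB : RegEpi cB :=
    regEpi_comp hE hcY (regEpi_comp hE (regEpi_pullback_fst hE _ _ hpA)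
      (regEpi_pullback_fst hE _ _ hpI))
  have cond1 : tB ≫ S.arrow ≫ prod.fst = tJ ≫ pI := by
    simpa using pullback.condition (f := S.arrow ≫ (prod.fst : I ⨯ A ⟶ I)) (g := pI)
  have cond2 : tb2 ≫ tB ≫ S.arrow ≫ prod.snd = tX ≫ pA := by
    simpa using pullback.condition (f := tB ≫ S.arrow ≫ (prod.snd : I ⨯ A ⟶ A)) (g := pA)
  have hf₀ : f₀ ≫ pI = cB ≫ S.arrow ≫ prod.fst := by
    calc f₀ ≫ pI = cY ≫ tb2 ≫ (tJ ≫ pI) := by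
            rw [hf₀def]; simp only [Category.assoc]
      _ = cY ≫ tb2 ≫ tB ≫ S.arrow ≫ prod.fst := by rw [← cond1]
      _ = cB ≫ S.arrow ≫ prod.fst := by rw [hcBdef]; simp only [Category.assoc]
  have hg₀ : g₀ ≫ pA = cB ≫ S.arrow ≫ prod.snd := by
    calc g₀ ≫ pA = cY ≫ (tX ≫ pA) := by rw [hg₀def]; simp only [Category.assoc]
      _ = cY ≫ tb2 ≫ tB ≫ S.arrow ≫ prod.snd := by rw [← cond2]
      _ = cB ≫ S.arrow ≫ prod.snd := by rw [hcBdef]; simp only [Category.assoc]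
  -- the pseudo simple product and the image of its indexing map
  obtain ⟨W, V, w, p, q, e, hgw⟩ := hpsp hJ₀ hY hX₀ f₀ g₀
  obtain ⟨I', ew, m, hew, hm, hfac⟩ := hE.factor (w ≫ pI)
  haveI := hm
  refine ⟨Subobject.mk m, fun T => ?_⟩
  conv_lhs => rw [← Subobject.mk_arrow T]
  conv_rhs => rw [← Subobject.mk_arrow T]
  rw [pullback_obj_mk, mk_le_iff, mk_le_mk_iff]
  constructor
  · rintro ⟨t, ht⟩
    -- cover `T` compatibly with `J₀`
    obtain ⟨W', hW', cQ, hcQ⟩ := hcover (pullback T.arrow pI)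
    set cw : W' ⟶ (T : E) := cQ ≫ pullback.fst T.arrow pI with hcwdef
    set w' : W' ⟶ J₀ := cQ ≫ pullback.snd T.arrow pI with hw'def
    have hw'pI : w' ≫ pI = cw ≫ T.arrow := by
      rw [hw'def, hcwdef]
      simp only [Category.assoc]
      rw [← pullback.condition]
    have hcw : RegEpi cw := regEpi_comp hE hcQ (regEpi_pullback_fst hE _ _ hpI)
    obtain ⟨V', hV', dM, hdM⟩ := hcover (pullback w' f₀)
    set p' : V' ⟶ W' := dM ≫ pullback.fst w' f₀ with hp'def
    set e' : V' ⟶ Y := dM ≫ pullback.snd w' f₀ with he'def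
    have cone : PSPCone P f₀ g₀ W' V' w' p' (e' ≫ g₀) e' := by
      refine ⟨hW', ⟨hV', ?_⟩, ?_, rfl⟩
      · -- weak product property
        intro V'' hV'' u v
        have hδc : (u ≫ cw) ≫ T.arrow =
            prod.lift (u ≫ cw ≫ T.arrow) (v ≫ pA) ≫ (prod.fst : I ⨯ A ⟶ I) := by
              rw [Category.assoc]; exact (prod.lift_fst _ _).symm
        set δ : V'' ⟶ pullback T.arrow (prod.fst : I ⨯ A ⟶ I) :=
          pullback.lift (u ≫ cw) (prod.lift (u ≫ cw ≫ T.arrow) (v ≫ pA)) hδc with hδdef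
        have hδn : δ ≫ pullback.snd T.arrow prod.fst =
            prod.lift (u ≫ cw ≫ T.arrow) (v ≫ pA) := pullback.lift_snd _ _ _
        have hδt1 : (δ ≫ t) ≫ S.arrow ≫ prod.fst = (u ≫ w') ≫ pI := by
          calc (δ ≫ t) ≫ S.arrow ≫ prod.fst
              = δ ≫ (t ≫ S.arrow) ≫ prod.fst := by simp only [Category.assoc]
            _ = δ ≫ pullback.snd T.arrow prod.fst ≫ prod.fst := by rw [ht]
            _ = (δ ≫ pullback.snd T.arrow prod.fst) ≫ prod.fst := by
                  simp only [Category.assoc]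
            _ = u ≫ cw ≫ T.arrow := by rw [hδn]; exact prod.lift_fst _ _
            _ = u ≫ w' ≫ pI := by rw [← hw'pI]
            _ = (u ≫ w') ≫ pI := by simp only [Category.assoc]
        have hδt2 : (δ ≫ t) ≫ S.arrow ≫ prod.snd = v ≫ pA := by
          calc (δ ≫ t) ≫ S.arrow ≫ prod.snd
              = δ ≫ (t ≫ S.arrow) ≫ prod.snd := by simp only [Category.assoc]
            _ = (δ ≫ pullback.snd T.arrow prod.fst) ≫ prod.snd := by
                  rw [ht]; simp only [Category.assoc]
            _ = v ≫ pA := by rw [hδn]; exact prod.lift_snd _ _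
        set τ : V'' ⟶ pullback (S.arrow ≫ (prod.fst : I ⨯ A ⟶ I)) pI :=
          pullback.lift (δ ≫ t) (u ≫ w')
            (by simp only [← Category.assoc] at hδt1 ⊢; exact hδt1) with hτdef
        have hτB : τ ≫ tB = δ ≫ t := by rw [htB]; exact pullback.lift_fst _ _ _
        have hτJ : τ ≫ tJ = u ≫ w' := by rw [htJ]; exact pullback.lift_snd _ _ _
        set τ2 : V'' ⟶ pullback (tB ≫ S.arrow ≫ (prod.snd : I ⨯ A ⟶ A)) pA :=
          pullback.lift τ v (by
            rw [← Category.assoc, hτB]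
            exact hδt2) with hτ2def
        have hτ2 : τ2 ≫ tb2 = τ := by rw [htb2]; exact pullback.lift_fst _ _ _
        have hτX : τ2 ≫ tX = v := by rw [htX]; exact pullback.lift_snd _ _ _
        obtain ⟨y'', hy''⟩ := hproj V'' hV'' cY hcY τ2
        have hyf : y'' ≫ f₀ = u ≫ w' := by
          rw [hf₀def, ← Category.assoc, hy'', ← Category.assoc, hτ2, hτJ]
        have hyg : y'' ≫ g₀ = v := by
          rw [hg₀def, ← Category.assoc, hy'', hτX]
        set μ : V'' ⟶ pullback w' f₀ := pullback.lift u y'' (by rw [hyf]) with hμdef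
        have hμ1 : μ ≫ pullback.fst w' f₀ = u := pullback.lift_fst _ _ _
        have hμ2 : μ ≫ pullback.snd w' f₀ = y'' := pullback.lift_snd _ _ _
        obtain ⟨h, hh⟩ := hproj V'' hV'' dM hdM μ
        refine ⟨h, ?_, ?_⟩
        · calc h ≫ p' = (h ≫ dM) ≫ pullback.fst w' f₀ := by
                rw [hp'def]; simp only [Category.assoc]
            _ = u := by rw [hh, hμ1]
        · calc h ≫ e' ≫ g₀ = ((h ≫ dM) ≫ pullback.snd w' f₀) ≫ g₀ := by
                rw [he'def]; simp only [Category.assoc]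
            _ = v := by rw [hh, hμ2, hyg]
      · -- comm₁
        rw [hp'def, he'def]
        simp only [Category.assoc]
        rw [pullback.condition]
    obtain ⟨α, β, hαw, -, -, -⟩ := hgw.lift w' p' (e' ≫ g₀) e' cone
    have hkey : (α ≫ ew) ≫ m = cw ≫ T.arrow := by
      rw [Category.assoc, hfac, ← Category.assoc, hαw, hw'pI]
    obtain ⟨s, -, hs⟩ := descend_mono hcw hm (α ≫ ew) T.arrow hkey
    exact ⟨s, hs⟩
  · rintro ⟨s, hs⟩
    obtain ⟨Z, hZ, dZ, hdZ⟩ := hcover (pullback T.arrow (prod.fst : I ⨯ A ⟶ I))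
    obtain ⟨zW, hzW⟩ := hproj Z hZ ew hew (dZ ≫ pullback.fst T.arrow prod.fst ≫ s)
    obtain ⟨zX, hzX⟩ := hproj Z hZ pA hpA (dZ ≫ pullback.snd T.arrow prod.fst ≫ prod.snd)
    obtain ⟨h, hp, hq⟩ := hgw.cone.wp.lift hZ zW zX
    have hu : (h ≫ e ≫ cB) ≫ S.arrow = dZ ≫ pullback.snd T.arrow prod.fst := by
      apply Limits.prod.hom_ext
      · calc ((h ≫ e ≫ cB) ≫ S.arrow) ≫ prod.fst
            = h ≫ e ≫ (cB ≫ S.arrow ≫ prod.fst) := by simp only [Category.assoc]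
          _ = h ≫ e ≫ f₀ ≫ pI := by rw [← hf₀]
          _ = h ≫ (e ≫ f₀) ≫ pI := by simp only [Category.assoc]
          _ = h ≫ (p ≫ w) ≫ pI := by rw [← hgw.cone.comm₁]
          _ = (h ≫ p) ≫ w ≫ pI := by simp only [Category.assoc]
          _ = zW ≫ ew ≫ m := by rw [hp, ← hfac]
          _ = (zW ≫ ew) ≫ m := by simp only [Category.assoc]
          _ = dZ ≫ pullback.fst T.arrow prod.fst ≫ s ≫ m := by
                rw [hzW]; simp only [Category.assoc]
          _ = dZ ≫ pullback.fst T.arrow prod.fst ≫ T.arrow := by rw [hs]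
          _ = dZ ≫ pullback.snd T.arrow prod.fst ≫ prod.fst := by rw [← pullback.condition]
          _ = (dZ ≫ pullback.snd T.arrow prod.fst) ≫ prod.fst := by
                simp only [Category.assoc]
      · calc ((h ≫ e ≫ cB) ≫ S.arrow) ≫ prod.snd
            = h ≫ e ≫ (cB ≫ S.arrow ≫ prod.snd) := by simp only [Category.assoc]
          _ = h ≫ e ≫ g₀ ≫ pA := by rw [← hg₀]
          _ = h ≫ (e ≫ g₀) ≫ pA := by simp only [Category.assoc]
          _ = (h ≫ q) ≫ pA := by rw [← hgw.cone.comm₂]; simp only [Category.assoc]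
          _ = zX ≫ pA := by rw [hq]
          _ = (dZ ≫ pullback.snd T.arrow prod.fst) ≫ prod.snd := by
                rw [hzX]; simp only [Category.assoc]
    obtain ⟨t, -, ht⟩ := descend_mono hdZ (Subobject.arrow_mono S) (h ≫ e ≫ cB)
      (pullback.snd T.arrow prod.fst) hu
    exact ⟨t, ht⟩

end Exactness

end Helpers

/-- If `P` has pseudo simple products, then for all `I, A` the inverse
image functor along the product projection, `Sub(I) ⥤ Sub(I ⨯ A)`, has a right
adjoint. -/
theorem stmt9 {E : Type u} [Category.{v} E] [HasFiniteLimits E]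
    (hE : IsExact E) (P : Set E) (hP : IsProjectiveCover P)
    (hpsp : HasPseudoSimpleProducts P) (I A : E) :
    (Subobject.pullback (prod.fst : I ⨯ A ⟶ I)).IsLeftAdjoint := by
  choose r hr using key_exists hE hP hpsp I A
  have mono_r : ∀ {S S' : Subobject (I ⨯ A)}, S ≤ S' → r S ≤ r S' := by
    intro S S' hss
    exact (hr S' (r S)).mp (le_trans ((hr S (r S)).mpr le_rfl) hss)
  let G : Subobject (I ⨯ A) ⥤ Subobject I :=
    { obj := r
      map := fun {S S'} f => homOfLE (mono_r (leOfHom f))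
      map_id := fun _ => Subsingleton.elim _ _
      map_comp := fun _ _ => Subsingleton.elim _ _ }
  refine ⟨⟨G, ⟨?_⟩⟩⟩
  exact Adjunction.mkOfHomEquiv
    { homEquiv := fun T S =>
        { toFun := fun f => homOfLE ((hr S T).mp (leOfHom f))
          invFun := fun g => homOfLE ((hr S T).mpr (leOfHom g))
          left_inv := fun _ => Subsingleton.elim _ _
          right_inv := fun _ => Subsingleton.elim _ _ }
      homEquiv_naturality_left_symm := fun _ _ => Subsingleton.elim _ _
      homEquiv_naturality_right := fun _ _ => Subsingleton.elim _ _ }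

end ExComp
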